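/- If G is prognosable (i.e., the 0-prognosability characterization holds: P⁻¹(P(prefixes(Ln \ Ψf^{-0}))) ∩ L ⊆ Ln \ Ψf^{-0}), then Ψf^{-0} is pre-normal w.r.t. L in the inclusion sense: P⁻¹(P(Ψf^{-0})) ∩ L ⊆ Ψf^{-0} ∪ Lf, i.e., no string of L that looks like a string of Ψf^{-0} can be a non-faulty string admitting arbitrarily long non-faulty extensions. Precisely: under the assumption that for every s ∈ P⁻¹(P(Ψf^{-0})) ∩ Ln \ Ψf^{-0}, for every n there exists an extension t of s in L with |t| ≥ n and st ∈ Ln, prognosability fails; contrapositively, prognosability implies P⁻¹(P(Ψf^{-0})) ∩ L ⊆ Ψf^{-0} ∪ Lf. -/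

import Mathlib

open List Set

variable {α : Type*}

/-- Natural projection: erase letters outside `A`. -/
def proj (A : Set α) [DecidablePred (· ∈ A)] : List α → List α :=
  fun s => s.filter (fun a => decide (a ∈ A))

/-- Prefix-closure of a language. -/
def pref (M : Set (List α)) : Set (List α) := {t | ∃ s ∈ M, t <+: s}

/-- `K·Σ*` : all extensions of strings of `K`. -/
def catStar (K : Set (List α)) : Set (List α) := {w | ∃ s ∈ K, ∃ t, w = s ++ t}

/-- A language is prefix-closed if it contains every prefix of each member. -/
def prefixClosed (M : Set (List α)) : Prop := ∀ s ∈ M, ∀ t, t <+: s → t ∈ M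
/-- prognosability (via the 0-prognosability characterization)
    implies P⁻¹P(Ψf^{-0}) ∩ L ⊆ Ψf^{-0} ∪ Lf, where
    Ψf^{-0} = P⁻¹P(Ψ(Sf))·Σ* ∩ prefixes(Ψ(Sf)). -/
theorem prognosable_implies_psiMinusZero_saturated
    (So Sf : Set α) [DecidablePred (· ∈ So)]
    (hfo : Sf ∩ So = ∅)
    (L Lf : Set (List α))
    (hL : prefixClosed L) (hLf : Lf ⊆ L)
    (hext : catStar Lf ∩ L ⊆ Lf)
    (hlive : ∀ s ∈ L, ∃ t : List α, t ≠ [] ∧ s ++ t ∈ L)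
    (Psi : Set (List α))
    (hPsi : Psi = {s ∈ L | ∃ w : List α, ∃ f ∈ Sf, s = w ++ [f]})
    (hPsiLf : Psi ⊆ Lf)
    (Psi0 : Set (List α))
    (hPsi0 : Psi0 = catStar {s | proj So s ∈ proj So '' Psi} ∩ pref Psi)
    (hprog : {s | proj So s ∈ proj So '' pref ((L \ Lf) \ Psi0)} ∩ L ⊆
        (L \ Lf) \ Psi0) :
    {s | proj So s ∈ proj So '' Psi0} ∩ L ⊆ Psi0 ∪ Lf := by
  rintro s ⟨⟨u, hu0, hup⟩, hsL⟩
  by_contra hns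
  rw [Set.mem_union, not_or] at hns
  obtain ⟨hsP0, hsLf⟩ := hns
  -- u ∈ L since u is a prefix of some ψ ∈ Psi ⊆ Lf ⊆ L
  have huL : u ∈ L := by
    rw [hPsi0] at hu0
    obtain ⟨-, ψ, hψ, hpre⟩ := hu0
    exact hL ψ (hLf (hPsiLf hψ)) u hpre
  -- s ∈ (L\Lf)\Psi0 and hence in its prefix-closure
  have hs : s ∈ pref ((L \ Lf) \ Psi0) :=
    ⟨s, ⟨⟨hsL, hsLf⟩, hsP0⟩, List.prefix_refl s⟩
  have := hprog ⟨⟨s, hs, hup.symm⟩, huL⟩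
  exact this.2 hu0
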